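/- If r·cos θ ≤ ε < r, then the complement ℝ² \ S_ε has exactly one connected component that is a bounded set, and the origin (0,0) belongs to that bounded component. -/

import Mathlib

open Metric Set Bornology

set_option maxHeartbeats 8000000

noncomputable def arcPt (a b : ℝ) : EuclideanSpace ℝ (Fin 2) := (WithLp.equiv 2 _).symm ![a, b]

@[simp] lemma arcPt_zero (a b : ℝ) : arcPt a b 0 = a := rfl
@[simp] lemma arcPt_one (a b : ℝ) : arcPt a b 1 = b := rfl

lemma arc_comb_apply (a b : ℝ) (x y : EuclideanSpace ℝ (Fin 2)) (i : Fin 2) :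
    (a • x + b • y) i = a * x i + b * y i := rfl

lemma arc_norm_sq_eq (p : EuclideanSpace ℝ (Fin 2)) : ‖p‖ ^ 2 = p 0 ^ 2 + p 1 ^ 2 := by
  rw [EuclideanSpace.norm_eq, Real.sq_sqrt (by positivity)]
  simp [Fin.sum_univ_two, sq_abs]

lemma arc_dist_sq_eq (p q : EuclideanSpace ℝ (Fin 2)) :
    dist p q ^ 2 = (p 0 - q 0) ^ 2 + (p 1 - q 1) ^ 2 := by
  rw [EuclideanSpace.dist_eq, Real.sq_sqrt (by positivity)]
  simp [Fin.sum_univ_two, Real.dist_eq, sq_abs]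

lemma arc_norm_eq_of_sq {p : EuclideanSpace ℝ (Fin 2)} {r : ℝ} (hr : 0 ≤ r)
    (h : p 0 ^ 2 + p 1 ^ 2 = r ^ 2) : ‖p‖ = r := by
  rw [← Real.sqrt_sq (norm_nonneg p), arc_norm_sq_eq, h, Real.sqrt_sq hr]

lemma arc_horiz_aux (r c s ε x y qx qy u : ℝ) (hc : 0 < c) (hs : 0 < s)
    (hcs : c ^ 2 + s ^ 2 = 1) (hy : 0 < y) (hxy : x * s < y * c) (hyrs : y < r * s)
    (hx : 0 ≤ x)
    (he : ε ^ 2 < (x - r * c) ^ 2 + (y - r * s) ^ 2)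
    (hq : qx ^ 2 + qy ^ 2 = r ^ 2) (hqy : qy ≤ r * s) (hqx : 0 ≤ qx)
    (hu0 : 0 ≤ u) (hu1 : u ≤ 1) :
    ε ^ 2 < (u * x - qx) ^ 2 + (y - qy) ^ 2 := by
  have hr : 0 < r := by nlinarith
  have hr2 : (r * c) ^ 2 + (r * s) ^ 2 = r ^ 2 := by
    rw [mul_pow, mul_pow, ← mul_add, hcs, mul_one]
  have hxrc : x < r * c := by nlinarith
  have hux : u * x ≤ x := by nlinarith
  have hux0 : 0 ≤ u * x := mul_nonneg hu0 hx
  have key1 : u * x * qx + y * qy ≤ u * x * (r * c) + y * (r * s) := by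
    rcases le_or_gt qx (r * c) with h | h
    · nlinarith [mul_nonneg hux0 (sub_nonneg.2 h),
        mul_nonneg hy.le (sub_nonneg.2 hqy)]
    · have hcs2 : c * qx + s * qy ≤ r := by nlinarith [sq_nonneg (s * qx - c * qy)]
      have hxys : u * x * s ≤ y * c := by nlinarith
      have h1 : (u * x * s) * (qx - r * c) ≤ (y * c) * (qx - r * c) :=
        mul_le_mul_of_nonneg_right hxys (sub_pos.2 h).le
      have h2 : y * (c * qx + s * qy) ≤ y * r := mul_le_mul_of_nonneg_left hcs2 hy.le
      have h4 : y * r * (c ^ 2 + s ^ 2) = y * r * 1 := by rw [hcs]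
      have h5 : s * (u * x * qx + y * qy - (u * x * (r * c) + y * (r * s))) ≤ 0 := by
        linarith [h1, h2, h4]
      nlinarith [h5, hs, mul_pos hs hs]
  have key2 : (x - r * c) ^ 2 ≤ (u * x - r * c) ^ 2 := by
    nlinarith [mul_nonneg (sub_nonneg.2 hux) (by nlinarith : 0 ≤ 2 * (r * c) - x - u * x)]
  nlinarith [key1, key2, he, hq, hr2]

lemma arc_horiz (r c s ε x y qx qy u : ℝ) (hc : 0 < c) (hs : 0 < s)
    (hcs : c ^ 2 + s ^ 2 = 1) (hy : 0 < y) (hxy : x * s < y * c) (hyrs : y < r * s)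
    (hx : 0 ≤ x)
    (he : ε ^ 2 < (x - r * c) ^ 2 + (y - r * s) ^ 2)
    (hq : qx ^ 2 + qy ^ 2 = r ^ 2) (hqy : qy ≤ r * s)
    (hu0 : 0 ≤ u) (hu1 : u ≤ 1) :
    ε ^ 2 < (u * x - qx) ^ 2 + (y - qy) ^ 2 := by
  rcases le_or_gt 0 qx with h | h
  · exact arc_horiz_aux r c s ε x y qx qy u hc hs hcs hy hxy hyrs hx he hq hqy h hu0 hu1
  · have h6 := arc_horiz_aux r c s ε x y (-qx) qy u hc hs hcs hy hxy hyrs hx he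
      (by nlinarith) hqy (by linarith) hu0 hu1
    have hux0 : 0 ≤ u * x := mul_nonneg hu0 hx
    nlinarith [h6, mul_nonneg hux0 (le_of_lt (neg_pos.2 h))]

lemma arc_vert (r c s ε y qx qy u : ℝ) (hc : 0 < c) (hs : 0 < s)
    (hcs : c ^ 2 + s ^ 2 = 1) (hy : 0 < y) (hyrs : y < r * s)
    (hkey : ε ^ 2 < (y - r * s) ^ 2 + (r * c) ^ 2)
    (hq : qx ^ 2 + qy ^ 2 = r ^ 2) (hqy : qy ≤ r * s)
    (hu0 : 0 ≤ u) (hu1 : u ≤ 1) :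
    ε ^ 2 < (0 - qx) ^ 2 + (u * y - qy) ^ 2 := by
  have hr : 0 < r := by nlinarith
  have hr2 : (r * c) ^ 2 + (r * s) ^ 2 = r ^ 2 := by
    rw [mul_pow, mul_pow, ← mul_add, hcs, mul_one]
  have huy : u * y ≤ y := by nlinarith
  have huy0 : 0 ≤ u * y := mul_nonneg hu0 hy.le
  have k1 : u * y * qy ≤ u * y * (r * s) := mul_le_mul_of_nonneg_left hqy huy0
  have k2 : (y - r * s) ^ 2 ≤ (u * y - r * s) ^ 2 := by
    nlinarith [mul_nonneg (sub_nonneg.2 huy) (by nlinarith : 0 ≤ 2 * (r * s) - y - u * y)]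
  nlinarith [hr2, hkey, k1, k2, hq]

/-- If `r·cos θ ≤ ε < r`, then the complement of the closed
`ε`-neighborhood of the arc has exactly one connected component that is a bounded
set, and the origin belongs to that bounded component. -/
theorem arc_complement_unique_bounded_component
    (r θ ε : ℝ) (hr : 0 < r) (hθ : θ ∈ Set.Ioo 0 (Real.pi / 2))
    (S : Set (EuclideanSpace ℝ (Fin 2)))
    (hS : S = {p : EuclideanSpace ℝ (Fin 2) | ‖p‖ = r ∧ p 1 ≤ r * Real.sin θ})
    (hε1 : r * Real.cos θ ≤ ε) (hε2 : ε < r) :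
    (∃! C : Set (EuclideanSpace ℝ (Fin 2)),
        (∃ p ∈ (Metric.cthickening ε S)ᶜ,
          C = connectedComponentIn (Metric.cthickening ε S)ᶜ p) ∧
        Bornology.IsBounded C) ∧
      (0 : EuclideanSpace ℝ (Fin 2)) ∈ (Metric.cthickening ε S)ᶜ ∧
      Bornology.IsBounded
        (connectedComponentIn (Metric.cthickening ε S)ᶜ
          (0 : EuclideanSpace ℝ (Fin 2))) := by
  obtain ⟨hθ0, hθ2⟩ := hθ
  have hs0 : 0 < Real.sin θ := Real.sin_pos_of_pos_of_lt_pi hθ0 (by linarith [Real.pi_pos])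
  have hc0 : 0 < Real.cos θ := Real.cos_pos_of_mem_Ioo ⟨by linarith [Real.pi_pos], hθ2⟩
  have hcs : Real.cos θ ^ 2 + Real.sin θ ^ 2 = 1 := Real.cos_sq_add_sin_sq θ
  have hs1 : Real.sin θ < 1 := by nlinarith
  have hε0 : 0 ≤ ε := le_trans (by positivity) hε1
  have hrs : 0 < r * Real.sin θ := by positivity
  set T : Set (EuclideanSpace ℝ (Fin 2)) := (Metric.cthickening ε S)ᶜ with hT
  -- coordinates characterization of S
  have hq_mem : ∀ q : EuclideanSpace ℝ (Fin 2),
      q ∈ S ↔ q 0 ^ 2 + q 1 ^ 2 = r ^ 2 ∧ q 1 ≤ r * Real.sin θ := by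
    intro q
    rw [hS]
    constructor
    · rintro ⟨h1, h2⟩
      exact ⟨by rw [← arc_norm_sq_eq, h1], h2⟩
    · rintro ⟨h1, h2⟩
      exact ⟨arc_norm_eq_of_sq hr.le h1, h2⟩
  have hSne : S.Nonempty := by
    refine ⟨arcPt 0 (-r), (hq_mem _).2 ⟨by simp only [arcPt_zero, arcPt_one]; ring, ?_⟩⟩
    simp only [arcPt_one]
    nlinarith
  have hScl : IsCompact S := by
    have hclosed : IsClosed S := by
      have : S = (fun p : EuclideanSpace ℝ (Fin 2) => ‖p‖) ⁻¹' {r} ∩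
          (fun p : EuclideanSpace ℝ (Fin 2) => p 1) ⁻¹' Iic (r * Real.sin θ) := by
        rw [hS]; ext p; simp [Set.mem_setOf_eq]
      rw [this]
      exact (isClosed_singleton.preimage continuous_norm).inter
        (isClosed_Iic.preimage (EuclideanSpace.proj (1 : Fin 2)).continuous)
    refine (isCompact_closedBall (0 : EuclideanSpace ℝ (Fin 2)) r).of_isClosed_subset hclosed ?_
    intro q hq
    rw [hS] at hq
    rw [Metric.mem_closedBall, dist_zero_right, hq.1]
  have hmemT : ∀ p : EuclideanSpace ℝ (Fin 2), p ∈ T ↔ ∀ q ∈ S, ε < dist p q := by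
    intro p
    constructor
    · intro h q hq
      by_contra hno
      push_neg at hno
      exact h (Metric.mem_cthickening_of_dist_le p q ε S hq hno)
    · intro h hmem
      obtain ⟨q, hqS, hdq⟩ := hScl.exists_infDist_eq_dist hSne p
      have h1 : Metric.infDist p S ≤ ε := by
        rw [Metric.mem_cthickening_iff] at hmem
        have h2 := ENNReal.toReal_mono ENNReal.ofReal_ne_top hmem
        rwa [ENNReal.toReal_ofReal hε0] at h2
      rw [hdq] at h1
      exact absurd h1 (not_le.2 (h q hqS))
  have sq_lt_dist : ∀ a b : EuclideanSpace ℝ (Fin 2), ε ^ 2 < dist a b ^ 2 → ε < dist a b := by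
    intro a b h
    nlinarith [dist_nonneg (x := a) (y := b)]
  have h0T : (0 : EuclideanSpace ℝ (Fin 2)) ∈ T := by
    refine (hmemT 0).2 fun q hq => ?_
    rw [hS] at hq
    rw [dist_comm, dist_zero_right, hq.1]
    exact hε2
  -- the bounded open region U
  set U : Set (EuclideanSpace ℝ (Fin 2)) :=
    {p | ‖p‖ < r ∧ p 1 < r * Real.sin θ} with hUdef
  have hUopen : IsOpen U := by
    have : U = {p : EuclideanSpace ℝ (Fin 2) | ‖p‖ < r} ∩
        {p : EuclideanSpace ℝ (Fin 2) | p 1 < r * Real.sin θ} := rfl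
    rw [this]
    exact (isOpen_lt continuous_norm continuous_const).inter
      (isOpen_lt (EuclideanSpace.proj (1 : Fin 2)).continuous continuous_const)
  have hfront : frontier U ⊆ Metric.cthickening ε S := by
    intro z hz
    have hzc : z ∈ closure U := hz.1
    have hzU : z ∉ U := by
      rw [hUopen.frontier_eq] at hz
      exact hz.2
    have hcl : closure U ⊆ {p : EuclideanSpace ℝ (Fin 2) | ‖p‖ ≤ r ∧ p 1 ≤ r * Real.sin θ} := by
      refine closure_minimal (fun p hp => ⟨hp.1.le, hp.2.le⟩) ?_
      exact (isClosed_le continuous_norm continuous_const).inter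
        (isClosed_le (EuclideanSpace.proj (1 : Fin 2)).continuous continuous_const)
    obtain ⟨hz1, hz2⟩ := hcl hzc
    by_cases hn : ‖z‖ = r
    · exact Metric.self_subset_cthickening S (by rw [hS]; exact ⟨hn, hz2⟩)
    · have hz1' : ‖z‖ < r := lt_of_le_of_ne hz1 hn
      have hz2' : z 1 = r * Real.sin θ := by
        by_contra hne
        exact hzU ⟨hz1', lt_of_le_of_ne hz2 hne⟩
      have hn2 : z 0 ^ 2 + z 1 ^ 2 ≤ r ^ 2 := by
        nlinarith [arc_norm_sq_eq z, norm_nonneg z]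
      have hz0sq : z 0 ^ 2 ≤ (r * Real.cos θ) ^ 2 := by
        rw [hz2'] at hn2
        nlinarith
      rcases le_or_gt 0 (z 0) with hzx | hzx
      · refine Metric.mem_cthickening_of_dist_le z
          (arcPt (r * Real.cos θ) (r * Real.sin θ)) ε S
          ((hq_mem _).2 ⟨by simp only [arcPt_zero, arcPt_one]; linear_combination r^2 * hcs, by simp⟩) ?_
        have hd : dist z (arcPt (r * Real.cos θ) (r * Real.sin θ)) ^ 2
            = (z 0 - r * Real.cos θ) ^ 2 := by
          rw [arc_dist_sq_eq]
          simp only [arcPt_zero, arcPt_one, hz2']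
          ring
        have hrc0 : 0 < r * Real.cos θ := mul_pos hr hc0
        have hle : z 0 ≤ r * Real.cos θ := by nlinarith [hz0sq, hrc0]
        have hd2 : dist z (arcPt (r * Real.cos θ) (r * Real.sin θ)) ^ 2 ≤ ε ^ 2 := by
          rw [hd]; nlinarith [hrc0, hε1, hε0]
        nlinarith [dist_nonneg (x := z) (y := arcPt (r * Real.cos θ) (r * Real.sin θ)), hd2, hε0]
      · refine Metric.mem_cthickening_of_dist_le z
          (arcPt (-(r * Real.cos θ)) (r * Real.sin θ)) ε S
          ((hq_mem _).2 ⟨by simp only [arcPt_zero, arcPt_one]; linear_combination r^2 * hcs, by simp⟩) ?_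
        have hd : dist z (arcPt (-(r * Real.cos θ)) (r * Real.sin θ)) ^ 2
            = (z 0 + r * Real.cos θ) ^ 2 := by
          rw [arc_dist_sq_eq]
          simp only [arcPt_zero, arcPt_one, hz2']
          ring
        have hrc0 : 0 < r * Real.cos θ := mul_pos hr hc0
        have hle : -(r * Real.cos θ) ≤ z 0 := by nlinarith [hz0sq, hrc0]
        have hd2 : dist z (arcPt (-(r * Real.cos θ)) (r * Real.sin θ)) ^ 2 ≤ ε ^ 2 := by
          rw [hd]; nlinarith [hrc0, hε1, hε0, hzx]
        nlinarith [dist_nonneg (x := z) (y := arcPt (-(r * Real.cos θ)) (r * Real.sin θ)), hd2, hε0]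
  have h0U : (0 : EuclideanSpace ℝ (Fin 2)) ∈ U := by
    constructor
    · simpa using hr
    · show (0 : EuclideanSpace ℝ (Fin 2)) 1 < r * Real.sin θ
      simpa using hrs
  have hC0U : connectedComponentIn T 0 ⊆ U := by
    have hpre := isPreconnected_connectedComponentIn
      (x := (0 : EuclideanSpace ℝ (Fin 2))) (F := T)
    have hsub : connectedComponentIn T 0 ⊆ U ∪ (closure U)ᶜ := by
      intro z hz
      have hzT : z ∈ T := connectedComponentIn_subset T 0 hz
      by_cases h1 : z ∈ U
      · exact Or.inl h1
      · refine Or.inr fun hcl => hzT (hfront ?_)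
        rw [hUopen.frontier_eq]
        exact ⟨hcl, h1⟩
    exact hpre.subset_left_of_subset_union hUopen isClosed_closure.isOpen_compl
      (disjoint_compl_right.mono_left subset_closure) hsub
      ⟨0, mem_connectedComponentIn h0T, h0U⟩
  have hbdd : IsBounded (connectedComponentIn T 0) := by
    refine (Metric.isBounded_ball (x := (0 : EuclideanSpace ℝ (Fin 2))) (r := r)).subset ?_
    exact hC0U.trans fun z hz => mem_ball_zero_iff.2 hz.1
  refine ⟨⟨connectedComponentIn T 0, ⟨⟨0, h0T, rfl⟩, hbdd⟩, ?_⟩, h0T, hbdd⟩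
  rintro C ⟨⟨p, hpT, rfl⟩, hCb⟩
  suffices hp0 : p ∈ connectedComponentIn T 0 by
    exact (connectedComponentIn_eq hp0).symm
  have hpq := (hmemT p).1 hpT
  by_cases hbig : r ≤ ‖p‖
  · exfalso
    set K : Set (EuclideanSpace ℝ (Fin 2)) := (fun t : ℝ => t • p) '' Ici (1 : ℝ) with hK
    have hKpre : IsPreconnected K :=
      isPreconnected_Ici.image _ (Continuous.continuousOn (by continuity))
    have hpK : p ∈ K := ⟨1, self_mem_Ici, one_smul ℝ p⟩
    have hKT : K ⊆ T := by
      rintro z ⟨t, ht, rfl⟩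
      rw [Set.mem_Ici] at ht
      refine (hmemT _).2 fun q hq => ?_
      have h1 : ε < dist p q := hpq q hq
      have h2 : ε ^ 2 < dist p q ^ 2 := by nlinarith [dist_nonneg (x := p) (y := q)]
      rw [arc_dist_sq_eq] at h2
      have hnp : r ^ 2 ≤ p 0 ^ 2 + p 1 ^ 2 := by
        nlinarith [arc_norm_sq_eq p, norm_nonneg p]
      have hqc : q 0 ^ 2 + q 1 ^ 2 = r ^ 2 := ((hq_mem q).1 hq).1
      refine sq_lt_dist _ _ ?_
      rw [arc_dist_sq_eq]
      have hsm0 : (t • p) 0 = t * p 0 := rfl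
      have hsm1 : (t • p) 1 = t * p 1 := rfl
      simp only [hsm0, hsm1]
      have hdot : 2 * (p 0 * q 0 + p 1 * q 1) ≤ (p 0 ^ 2 + p 1 ^ 2) + r ^ 2 := by
        nlinarith [sq_nonneg (p 0 - q 0), sq_nonneg (p 1 - q 1)]
      have hkey3 : 0 ≤ (t - 1) *
          ((t + 1) * (p 0 ^ 2 + p 1 ^ 2) - 2 * (p 0 * q 0 + p 1 * q 1)) := by
        refine mul_nonneg (by linarith) ?_
        nlinarith [hnp, hdot]
      nlinarith [hkey3, h2]
    have hKC : K ⊆ connectedComponentIn T p := hKpre.subset_connectedComponentIn hpK hKT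
    obtain ⟨R, hR⟩ := hCb.subset_closedBall 0
    set t0 : ℝ := max 1 ((R + 1) / ‖p‖) with ht0
    have hp0' : 0 < ‖p‖ := lt_of_lt_of_le hr hbig
    have ht0K : t0 • p ∈ K := ⟨t0, Set.mem_Ici.2 (le_max_left _ _), rfl⟩
    have hmem := hR (hKC ht0K)
    rw [mem_closedBall_zero_iff] at hmem
    have ht01 : (1 : ℝ) ≤ t0 := le_max_left _ _
    have hnorm : ‖t0 • p‖ = t0 * ‖p‖ := by
      rw [norm_smul, Real.norm_eq_abs, abs_of_pos (by linarith)]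
    have hge : R + 1 ≤ t0 * ‖p‖ := by
      have := le_max_right 1 ((R + 1) / ‖p‖)
      exact (div_le_iff₀ hp0').1 this
    rw [hnorm] at hmem
    linarith
  push_neg at hbig
  by_cases htop : r * Real.sin θ ≤ p 1
  · exfalso
    set e2 : EuclideanSpace ℝ (Fin 2) := arcPt 0 1 with he2
    set K : Set (EuclideanSpace ℝ (Fin 2)) := (fun t : ℝ => p + t • e2) '' Ici (0 : ℝ) with hK
    have hKpre : IsPreconnected K :=
      isPreconnected_Ici.image _ (Continuous.continuousOn (by continuity))
    have hpK : p ∈ K := ⟨0, self_mem_Ici, by simp⟩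
    have hcoord : ∀ t : ℝ, (p + t • e2) 0 = p 0 ∧ (p + t • e2) 1 = p 1 + t := by
      intro t
      constructor
      · show p 0 + t * (arcPt 0 1 0) = p 0
        simp
      · show p 1 + t * (arcPt 0 1 1) = p 1 + t
        simp
    have hKT : K ⊆ T := by
      rintro z ⟨t, ht, rfl⟩
      rw [Set.mem_Ici] at ht
      refine (hmemT _).2 fun q hq => ?_
      have h1 : ε < dist p q := hpq q hq
      have h2 : ε ^ 2 < dist p q ^ 2 := by nlinarith [dist_nonneg (x := p) (y := q)]
      rw [arc_dist_sq_eq] at h2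
      have hqy : q 1 ≤ r * Real.sin θ := ((hq_mem q).1 hq).2
      refine sq_lt_dist _ _ ?_
      rw [arc_dist_sq_eq]
      simp only [(hcoord t).1, (hcoord t).2]
      nlinarith [mul_nonneg ht (sub_nonneg.2 (le_trans hqy htop)), sq_nonneg t]
    have hKC : K ⊆ connectedComponentIn T p := hKpre.subset_connectedComponentIn hpK hKT
    obtain ⟨R, hR⟩ := hCb.subset_closedBall 0
    set t0 : ℝ := |R| + 1 with ht0
    have ht0K : p + t0 • e2 ∈ K := ⟨t0, Set.mem_Ici.2 (by positivity), rfl⟩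
    have hmem := hR (hKC ht0K)
    rw [mem_closedBall_zero_iff] at hmem
    have hz1 : (p + t0 • e2) 1 = p 1 + t0 := (hcoord t0).2
    have habs : R ≤ |R| := le_abs_self R
    nlinarith [arc_norm_sq_eq (p + t0 • e2), sq_nonneg ((p + t0 • e2) 0),
      norm_nonneg (p + t0 • e2), abs_nonneg R]
  push_neg at htop
  by_cases hcase : p 1 ≤ ‖p‖ * Real.sin θ
  · -- inner ball case
    rcases eq_or_ne p 0 with rfl | hpne
    · exact mem_connectedComponentIn h0T
    · have hpn0 : 0 < ‖p‖ := norm_pos_iff.2 hpne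
      set qstar : EuclideanSpace ℝ (Fin 2) := (r / ‖p‖) • p with hqs
      have hqstarS : qstar ∈ S := by
        rw [hS]
        constructor
        · rw [norm_smul, Real.norm_eq_abs, abs_of_pos (div_pos hr hpn0)]
          field_simp
        · show (r / ‖p‖) * p 1 ≤ r * Real.sin θ
          have h1 : (r / ‖p‖) * p 1 ≤ (r / ‖p‖) * (‖p‖ * Real.sin θ) :=
            mul_le_mul_of_nonneg_left hcase (div_pos hr hpn0).le
          calc (r / ‖p‖) * p 1 ≤ (r / ‖p‖) * (‖p‖ * Real.sin θ) := h1
            _ = r * Real.sin θ := by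
              rw [← mul_assoc, div_mul_cancel₀ r hpn0.ne']
      have hdist : dist p qstar = r - ‖p‖ := by
        rw [dist_eq_norm]
        have h1 : p - (r / ‖p‖) • p = (1 - r / ‖p‖) • p := by
          rw [sub_smul, one_smul]
        rw [hqs, h1, norm_smul, Real.norm_eq_abs]
        have h2 : 1 - r / ‖p‖ < 0 := by
          rw [sub_neg]
          exact (one_lt_div hpn0).2 hbig
        rw [abs_of_neg h2]
        field_simp
        ring
      have hεr : ε < r - ‖p‖ := by
        have := hpq qstar hqstarS
        rwa [hdist] at this
      have hKT : Metric.closedBall (0 : EuclideanSpace ℝ (Fin 2)) ‖p‖ ⊆ T := by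
        intro z hz
        refine (hmemT z).2 fun q hq => ?_
        have h1 : ‖q‖ - ‖z‖ ≤ dist z q := by
          rw [dist_eq_norm, ← norm_sub_rev]
          exact norm_sub_norm_le q z
        have hzn : ‖z‖ ≤ ‖p‖ := mem_closedBall_zero_iff.1 hz
        rw [hS] at hq
        rw [hq.1] at h1
        linarith
      refine (convex_closedBall _ _).isPreconnected.subset_connectedComponentIn
        (mem_closedBall_zero_iff.2 (by simp [norm_nonneg])) hKT ?_
      exact mem_closedBall_zero_iff.2 le_rfl
  · -- L-shaped path case
    push_neg at hcase
    have hy0 : 0 < p 1 := lt_of_le_of_lt (by positivity) hcase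
    have hxyineq : p 1 * Real.cos θ > |p 0| * Real.sin θ := by
      have h1 : p 1 ^ 2 > (p 0 ^ 2 + p 1 ^ 2) * Real.sin θ ^ 2 := by
        nlinarith [arc_norm_sq_eq p, mul_nonneg (norm_nonneg p) hs0.le]
      have h2 : (p 1 * Real.cos θ) ^ 2 > (|p 0| * Real.sin θ) ^ 2 := by
        rw [mul_pow, mul_pow, sq_abs]
        nlinarith
      nlinarith [abs_nonneg (p 0), mul_nonneg (abs_nonneg (p 0)) hs0.le,
        mul_pos hy0 hc0]
    set eplus : EuclideanSpace ℝ (Fin 2) := arcPt (r * Real.cos θ) (r * Real.sin θ) with hep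
    set eminus : EuclideanSpace ℝ (Fin 2) := arcPt (-(r * Real.cos θ)) (r * Real.sin θ) with hem
    have heplusS : eplus ∈ S := (hq_mem _).2 ⟨by simp only [hep, arcPt_zero, arcPt_one]; linear_combination r^2 * hcs, by simp [hep]⟩
    have heminusS : eminus ∈ S := (hq_mem _).2 ⟨by simp only [hem, arcPt_zero, arcPt_one]; linear_combination r^2 * hcs, by simp [hem]⟩
    have he_plus : ε ^ 2 < (p 0 - r * Real.cos θ) ^ 2 + (p 1 - r * Real.sin θ) ^ 2 := by
      have h1 := hpq eplus heplusS
      have h2 : ε ^ 2 < dist p eplus ^ 2 := by nlinarith [dist_nonneg (x := p) (y := eplus)]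
      rw [arc_dist_sq_eq] at h2
      simpa [hep] using h2
    have he_minus : ε ^ 2 < (p 0 + r * Real.cos θ) ^ 2 + (p 1 - r * Real.sin θ) ^ 2 := by
      have h1 := hpq eminus heminusS
      have h2 : ε ^ 2 < dist p eminus ^ 2 := by nlinarith [dist_nonneg (x := p) (y := eminus)]
      rw [arc_dist_sq_eq] at h2
      have h3 : (p 0 - eminus 0) ^ 2 = (p 0 + r * Real.cos θ) ^ 2 := by
        simp [hem]
      rw [h3] at h2
      simpa [hem] using h2
    set m : EuclideanSpace ℝ (Fin 2) := arcPt 0 (p 1) with hm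
    have hK1T : segment ℝ p m ⊆ T := by
      intro z hz
      rw [segment_eq_image] at hz
      obtain ⟨t, ⟨ht0, ht1⟩, rfl⟩ := hz
      have hu0 : 0 ≤ 1 - t := by linarith
      have hu1 : 1 - t ≤ 1 := by linarith
      have hz0 : ((1 - t) • p + t • m) 0 = (1 - t) * p 0 := by
        rw [arc_comb_apply, hm]
        simp
      have hz1 : ((1 - t) • p + t • m) 1 = p 1 := by
        rw [arc_comb_apply, hm]
        simp only [arcPt_one]
        ring
      refine (hmemT _).2 fun q hq => ?_
      obtain ⟨hqc, hqy⟩ := (hq_mem q).1 hq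
      refine sq_lt_dist _ _ ?_
      rw [arc_dist_sq_eq]
      simp only [hz0, hz1]
      rcases le_or_gt 0 (p 0) with hx0 | hx0
      · have hxy' : p 0 * Real.sin θ < p 1 * Real.cos θ := by
          calc p 0 * Real.sin θ ≤ |p 0| * Real.sin θ :=
                mul_le_mul_of_nonneg_right (le_abs_self _) hs0.le
            _ < p 1 * Real.cos θ := hxyineq
        exact arc_horiz r (Real.cos θ) (Real.sin θ) ε (p 0) (p 1) (q 0) (q 1) (1 - t)
          hc0 hs0 hcs hy0 hxy' htop hx0 he_plus hqc hqy hu0 hu1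
      · have hxy' : (-(p 0)) * Real.sin θ < p 1 * Real.cos θ := by
          calc (-(p 0)) * Real.sin θ ≤ |p 0| * Real.sin θ :=
                mul_le_mul_of_nonneg_right (neg_le_abs _) hs0.le
            _ < p 1 * Real.cos θ := hxyineq
        have he' : ε ^ 2 < (-(p 0) - r * Real.cos θ) ^ 2 + (p 1 - r * Real.sin θ) ^ 2 := by
          have : (-(p 0) - r * Real.cos θ) ^ 2 = (p 0 + r * Real.cos θ) ^ 2 := by ring
          rw [this]
          exact he_minus
        have h6 := arc_horiz r (Real.cos θ) (Real.sin θ) ε (-(p 0)) (p 1) (-(q 0)) (q 1) (1 - t)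
          hc0 hs0 hcs hy0 hxy' htop (by linarith) he' (by nlinarith) hqy hu0 hu1
        have h7 : ((1 - t) * (-(p 0)) - (-(q 0))) ^ 2 = ((1 - t) * p 0 - q 0) ^ 2 := by ring
        rw [h7] at h6
        exact h6
    have hkeyv : ε ^ 2 < (p 1 - r * Real.sin θ) ^ 2 + (r * Real.cos θ) ^ 2 := by
      rcases le_or_gt 0 (p 0) with hx0 | hx0
      · have hp0rc : p 0 < r * Real.cos θ := by
          nlinarith [hxyineq, abs_of_nonneg hx0]
        nlinarith [he_plus]
      · have hp0rc : -(r * Real.cos θ) < p 0 := by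
          nlinarith [hxyineq, abs_of_neg hx0]
        nlinarith [he_minus]
    have hK2T : segment ℝ m (0 : EuclideanSpace ℝ (Fin 2)) ⊆ T := by
      intro z hz
      rw [segment_eq_image] at hz
      obtain ⟨t, ⟨ht0, ht1⟩, rfl⟩ := hz
      have hu0 : 0 ≤ 1 - t := by linarith
      have hu1 : 1 - t ≤ 1 := by linarith
      have hz0 : ((1 - t) • m + t • (0 : EuclideanSpace ℝ (Fin 2))) 0 = 0 := by
        rw [arc_comb_apply, hm]
        simp
      have hz1 : ((1 - t) • m + t • (0 : EuclideanSpace ℝ (Fin 2))) 1 = (1 - t) * p 1 := by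
        rw [arc_comb_apply, hm]
        simp
      refine (hmemT _).2 fun q hq => ?_
      obtain ⟨hqc, hqy⟩ := (hq_mem q).1 hq
      refine sq_lt_dist _ _ ?_
      rw [arc_dist_sq_eq]
      simp only [hz0, hz1]
      exact arc_vert r (Real.cos θ) (Real.sin θ) ε (p 1) (q 0) (q 1) (1 - t)
        hc0 hs0 hcs hy0 htop hkeyv hqc hqy hu0 hu1
    have h12 : IsPreconnected (segment ℝ p m ∪ segment ℝ m (0 : EuclideanSpace ℝ (Fin 2))) :=
      IsPreconnected.union m (right_mem_segment _ _ _) (left_mem_segment _ _ _)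
        (convex_segment _ _).isPreconnected (convex_segment _ _).isPreconnected
    have hsub := h12.subset_connectedComponentIn
      (x := (0 : EuclideanSpace ℝ (Fin 2)))
      (Or.inr (right_mem_segment _ _ _)) (Set.union_subset hK1T hK2T)
    exact hsub (Or.inl (left_mem_segment _ _ _))
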